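/- Let p, q be nonzero real polynomials, K ⊆ ℂ compact, and Z := {z ∈ ℂ : p(Re z) = 0 and q(Im z) = 0}. Assume there is C₀ > 0 with max(|p(Re z)|, |q(Im z)|) ≤ C₀ · |p(Re z) + q(Im z)| for all z ∈ K. Let φ : K \ Z → ℂ be bounded and Borel measurable, and suppose that for each w ∈ K ∩ Z there are complex numbers c^w_{k,l} (0 ≤ k ≤ d_p(Re w) − 1, 0 ≤ l ≤ d_q(Im w) − 1) and constants C_w, δ_w > 0 such that |φ(z) − Σ_{k,l} c^w_{k,l} Re(z−w)^k Im(z−w)^l| ≤ C_w · max(|Re(z−w)|^{d_p(Re w)}, |Im(z−w)|^{d_q(Im w)}) for all z ∈ K \ Z with 0 < |z−w| < δ_w. Then there exist a polynomial s ∈ ℂ[z,w] with (1/(k! l!)) ∂^{k+l} s/∂z^k ∂w^l (Re w, Im w) = c^w_{k,l} for all w ∈ K ∩ Z and all such k, l, and a bounded Borel measurable function g : K \ Z → ℂ, such that φ(z) = s(Re z, Im z) + (p(Re z) + q(Im z)) · g(z) for all z ∈ K \ Z. -/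

import Mathlib

open MvPolynomial
namespace Stmt13Aux
local notation "R2" => MvPolynomial (Fin 2) ℂ




/-- iterate of pderiv is additive -/
lemma iter_pderiv_add (i : Fin 2) (k : ℕ) (u v : R2) :
    (fun t => pderiv i t)^[k] (u + v)
      = (fun t => pderiv i t)^[k] u + (fun t => pderiv i t)^[k] v := by
  induction k generalizing u v with
  | zero => simp
  | succ k ih => simp [Function.iterate_succ_apply, map_add, ih]

/-- pderiv i kills (X j - C γ)-powers for j ≠ i, so commutes with multiplication. -/
lemma pderiv_mul_pow_other {i j : Fin 2} (hij : i ≠ j) (γ : ℂ) (M : ℕ) (v : R2) :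
    pderiv i ((X j - C γ) ^ M * v) = (X j - C γ) ^ M * pderiv i v := by
  rw [pderiv_mul, pderiv_pow]
  simp [pderiv_X_of_ne hij.symm]

lemma iter_pderiv_dvd_other {i j : Fin 2} (hij : i ≠ j) (γ : ℂ) (M k : ℕ) {u : R2}
    (hu : (X j - C γ) ^ M ∣ u) :
    (X j - C γ) ^ M ∣ (fun t => pderiv i t)^[k] u := by
  induction k generalizing u with
  | zero => simpa
  | succ k ih =>
    rw [Function.iterate_succ_apply]
    obtain ⟨v, rfl⟩ := hu
    exact ih ⟨pderiv i v, pderiv_mul_pow_other hij γ M v⟩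

lemma pderiv_mul_pow_same (i : Fin 2) (γ : ℂ) (j : ℕ) (v : R2) :
    pderiv i ((X i - C γ) ^ (j+1) * v)
      = (X i - C γ) ^ j * (((j:ℂ)+1) • v + (X i - C γ) * pderiv i v) := by
  rw [pderiv_mul, pderiv_pow]
  simp only [map_sub, pderiv_C, sub_zero, pderiv_X_self, mul_one]
  rw [smul_eq_C_mul, map_add, map_one, map_natCast]
  have h1 : j + 1 - 1 = j := by omega
  rw [h1]
  push_cast
  ring

lemma iter_pderiv_dvd_same (i : Fin 2) (γ : ℂ) (M : ℕ) :
    ∀ k ≤ M, ∀ u : R2, (X i - C γ) ^ M ∣ u →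
      (X i - C γ) ^ (M - k) ∣ (fun t => pderiv i t)^[k] u := by
  intro k
  induction k with
  | zero => intro _ u hu; simpa
  | succ k ih =>
    intro hk u hu
    have hk' : k ≤ M := Nat.le_of_succ_le hk
    obtain ⟨v, hv⟩ := ih hk' u hu
    rw [Function.iterate_succ_apply', hv]
    have hMk : M - k = (M - (k+1)) + 1 := by omega
    rw [hMk, pderiv_mul_pow_same]
    exact Dvd.intro _ rfl

lemma eval_eq_zero_of_dvd_pow (i : Fin 2) (γ : ℂ) (V : Fin 2 → ℂ) (hV : V i = γ)
    (N : ℕ) (hN : 0 < N) {u : R2} (hu : (X i - C γ) ^ N ∣ u) :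
    eval V u = 0 := by
  obtain ⟨v, rfl⟩ := hu
  simp [hV, zero_pow hN.ne']

/-- main vanishing lemma, divisibility in variable 0 -/
lemma vanish0 (α β : ℂ) (M k l : ℕ) (hk : k < M) {u : R2}
    (hu : (X (0:Fin 2) - C α) ^ M ∣ u) :
    eval ![α, β] ((fun t => pderiv (0:Fin 2) t)^[k]
      ((fun t => pderiv (1:Fin 2) t)^[l] u)) = 0 := by
  have h1 : (X (0:Fin 2) - C α) ^ M ∣ (fun t => pderiv (1:Fin 2) t)^[l] u :=
    iter_pderiv_dvd_other (by decide) α M l hu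
  have h2 := iter_pderiv_dvd_same (0:Fin 2) α M k hk.le _ h1
  exact eval_eq_zero_of_dvd_pow 0 α ![α, β] rfl (M - k) (by omega) h2

/-- main vanishing lemma, divisibility in variable 1 -/
lemma vanish1 (α β : ℂ) (M k l : ℕ) (hl : l < M) {u : R2}
    (hu : (X (1:Fin 2) - C β) ^ M ∣ u) :
    eval ![α, β] ((fun t => pderiv (0:Fin 2) t)^[k]
      ((fun t => pderiv (1:Fin 2) t)^[l] u)) = 0 := by
  have h1 := iter_pderiv_dvd_same (1:Fin 2) β M l hl.le _ hu
  have h2 : (X (1:Fin 2) - C β) ^ (M - l) ∣ (fun t => pderiv (0:Fin 2) t)^[k]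
      ((fun t => pderiv (1:Fin 2) t)^[l] u) :=
    iter_pderiv_dvd_other (by decide) β (M-l) k h1
  exact eval_eq_zero_of_dvd_pow 1 β ![α, β] rfl (M - l) (by omega) h2





lemma iter_pderiv_mul_const (i : Fin 2) {w : R2} (hw : pderiv i w = 0) (k : ℕ) (v : R2) :
    (fun t => pderiv i t)^[k] (w * v) = w * (fun t => pderiv i t)^[k] v := by
  induction k generalizing v with
  | zero => simp
  | succ k ih =>
    rw [Function.iterate_succ_apply, Function.iterate_succ_apply]
    rw [show pderiv i (w * v) = w * pderiv i v by rw [pderiv_mul, hw]; ring]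
    exact ih _

lemma iter_pderiv_self_pow (i : Fin 2) (γ : ℂ) (k' k : ℕ) :
    (fun t => pderiv i t)^[k] ((X i - C γ) ^ k')
      = C ((Nat.descFactorial k' k : ℂ)) * (X i - C γ) ^ (k' - k) := by
  induction k with
  | zero => simp
  | succ k ih =>
    rw [Function.iterate_succ_apply', ih, pderiv_C_mul, pderiv_pow]
    simp only [map_sub, pderiv_C, sub_zero, pderiv_X_self, mul_one]
    rw [Nat.descFactorial_succ]
    have h1 : k' - k - 1 = k' - (k+1) := by omega
    rw [← h1, Nat.cast_mul, map_mul, map_natCast, map_natCast]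
    ring

lemma eval_iter_jet (α β : ℂ) (cc : ℂ) (k l k' l' : ℕ) :
    eval ![α, β] ((fun t => pderiv (0:Fin 2) t)^[k]
      ((fun t => pderiv (1:Fin 2) t)^[l]
        (C cc * (X (0:Fin 2) - C α) ^ k' * (X (1:Fin 2) - C β) ^ l')))
      = if k' = k ∧ l' = l then (k.factorial * l.factorial : ℂ) * cc else 0 := by
  have hw1 : pderiv (1:Fin 2) (C cc * (X (0:Fin 2) - C α) ^ k') = 0 := by
    rw [pderiv_C_mul, pderiv_pow]
    simp [pderiv_X_of_ne (show (0:Fin 2) ≠ 1 by decide)]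
  rw [mul_assoc, ← mul_assoc (C cc)]
  rw [iter_pderiv_mul_const 1 hw1, iter_pderiv_self_pow]
  have hw0 : pderiv (0:Fin 2) (C ((Nat.descFactorial l' l : ℂ))
      * (X (1:Fin 2) - C β) ^ (l' - l)) = 0 := by
    rw [pderiv_C_mul, pderiv_pow]
    simp [pderiv_X_of_ne (show (1:Fin 2) ≠ 0 by decide)]
  rw [show C cc * (X (0:Fin 2) - C α) ^ k'
        * (C ((Nat.descFactorial l' l : ℂ)) * (X (1:Fin 2) - C β) ^ (l' - l))
      = (C cc * (C ((Nat.descFactorial l' l : ℂ)) * (X (1:Fin 2) - C β) ^ (l' - l)))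
        * (X (0:Fin 2) - C α) ^ k' by ring]
  rw [iter_pderiv_mul_const 0 (by rw [pderiv_C_mul, hw0]; ring), iter_pderiv_self_pow]
  simp only [map_mul, eval_C, eval_pow, eval_sub, eval_X]
  rw [show (![α, β] : Fin 2 → ℂ) 0 = α from rfl, show (![α, β] : Fin 2 → ℂ) 1 = β from rfl]
  simp only [sub_self]
  by_cases hkk : k' = k
  · by_cases hll : l' = l
    · subst hkk; subst hll
      simp [Nat.descFactorial_self]
      ring
    · rw [if_neg (by tauto)]
      rcases Nat.lt_or_ge l' l with h | h
      · rw [Nat.descFactorial_eq_zero_iff_lt.2 h]; push_cast; ring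
      · have : 0 < l' - l := by omega
        rw [zero_pow this.ne']; ring
  · rw [if_neg (by tauto)]
    rcases Nat.lt_or_ge k' k with h | h
    · rw [Nat.descFactorial_eq_zero_iff_lt.2 h]; push_cast; ring
    · have : 0 < k' - k := by omega
      rw [zero_pow this.ne']; ring

lemma iter_pderiv_sum (i : Fin 2) (k : ℕ) {ι : Type*} (s : Finset ι) (f : ι → R2) :
    (fun t => pderiv i t)^[k] (∑ x ∈ s, f x) = ∑ x ∈ s, (fun t => pderiv i t)^[k] (f x) := by
  induction k with
  | zero => simp
  | succ k ih =>
    rw [Function.iterate_succ_apply']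
    rw [ih, map_sum]
    simp only [Function.iterate_succ_apply']




lemma exists_partition_poly (A : Finset ℂ) (a : ℂ) (M : ℕ) :
    ∃ E : Polynomial ℂ, (Polynomial.X - Polynomial.C a) ^ M ∣ (E - 1) ∧
      ∀ a' ∈ A, a' ≠ a → (Polynomial.X - Polynomial.C a') ^ M ∣ E := by
  classical
  set P : Polynomial ℂ := ∏ a' ∈ A.erase a, (Polynomial.X - Polynomial.C a') ^ M with hP
  have hcop : IsCoprime P ((Polynomial.X - Polynomial.C a) ^ M) := by
    apply IsCoprime.prod_left
    intro a' ha'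
    exact (Polynomial.isCoprime_X_sub_C_of_isUnit_sub
      (sub_ne_zero.2 (Finset.ne_of_mem_erase ha')).isUnit).pow
  obtain ⟨u, v, huv⟩ := hcop
  refine ⟨u * P, ⟨-v, ?_⟩, ?_⟩
  · rw [mul_comm] at huv ⊢
    linear_combination huv
  · intro a' ha' hne
    have h1 : (Polynomial.X - Polynomial.C a') ^ M ∣ P :=
      Finset.dvd_prod_of_mem _ (Finset.mem_erase.2 ⟨hne, ha'⟩)
    exact h1.mul_left u

lemma exists_factor_real (p : Polynomial ℝ) (hp : p ≠ 0) (a : ℝ) :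
    ∃ p₁ : Polynomial ℝ, p₁.eval a ≠ 0 ∧
      ∀ x : ℝ, p.eval x = (x - a) ^ (Polynomial.rootMultiplicity a p) * p₁.eval x := by
  refine ⟨p /ₘ (Polynomial.X - Polynomial.C a) ^ (Polynomial.rootMultiplicity a p),
    Polynomial.eval_divByMonic_pow_rootMultiplicity_ne_zero a hp, fun x => ?_⟩
  conv_lhs => rw [← Polynomial.pow_mul_divByMonic_rootMultiplicity_eq p a]
  simp

lemma exists_lower_bound_near (p₁ : Polynomial ℝ) (a : ℝ) (h : p₁.eval a ≠ 0) :
    ∃ ρ > (0:ℝ), ∀ x : ℝ, |x - a| ≤ ρ → |p₁.eval a| / 2 ≤ |p₁.eval x| := by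
  have hc : ContinuousAt (fun x => p₁.eval x) a := (Polynomial.continuous p₁).continuousAt
  rw [Metric.continuousAt_iff] at hc
  obtain ⟨δ, hδ, hδ'⟩ := hc (|p₁.eval a| / 2) (by positivity)
  refine ⟨δ / 2, by positivity, fun x hx => ?_⟩
  have h1 : dist x a < δ := by rw [Real.dist_eq]; linarith
  have h2 := hδ' h1
  rw [Real.dist_eq] at h2
  have h3 : |p₁.eval a| - |p₁.eval x| ≤ |p₁.eval x - p₁.eval a| := by
    rw [abs_sub_comm]; exact abs_sub_abs_le_abs_sub _ _
  linarith


section Construction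

variable (p q : Polynomial ℝ) (c : ℂ → ℕ → ℕ → ℂ)

/-- the common exponent -/
noncomputable def MM : ℕ := p.natDegree + q.natDegree

lemma mult_le_MM_left (hp : p ≠ 0) (a : ℝ) : Polynomial.rootMultiplicity a p ≤ MM p q := by
  have h1 : (Polynomial.X - Polynomial.C a) ^ (Polynomial.rootMultiplicity a p) ∣ p :=
    Polynomial.pow_rootMultiplicity_dvd p a
  have h2 := Polynomial.natDegree_le_of_dvd h1 hp
  simp only [Polynomial.natDegree_pow, Polynomial.natDegree_X_sub_C, mul_one] at h2
  exact le_trans h2 (Nat.le_add_right _ _)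

lemma mult_le_MM_right (hq : q ≠ 0) (b : ℝ) : Polynomial.rootMultiplicity b q ≤ MM p q := by
  have h1 : (Polynomial.X - Polynomial.C b) ^ (Polynomial.rootMultiplicity b q) ∣ q :=
    Polynomial.pow_rootMultiplicity_dvd q b
  have h2 := Polynomial.natDegree_le_of_dvd h1 hq
  simp only [Polynomial.natDegree_pow, Polynomial.natDegree_X_sub_C, mul_one] at h2
  exact le_trans h2 (Nat.le_add_left _ _)

/-- partition-of-unity polynomials for the roots of `p` -/
noncomputable def EA (a : ℝ) : Polynomial ℂ :=
  (exists_partition_poly ((p.roots.toFinset).image (fun x : ℝ => (x:ℂ))) (a:ℂ) (MM p q)).choose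

lemma EA_spec1 (a : ℝ) :
    (Polynomial.X - Polynomial.C (a:ℂ)) ^ (MM p q) ∣ (EA p q a - 1) :=
  (exists_partition_poly _ _ _).choose_spec.1

lemma EA_spec2 (a : ℝ) (a' : ℝ) (ha' : a' ∈ p.roots.toFinset) (hne : a' ≠ a) :
    (Polynomial.X - Polynomial.C (a':ℂ)) ^ (MM p q) ∣ EA p q a :=
  (exists_partition_poly _ _ _).choose_spec.2 _
    (Finset.mem_image_of_mem _ ha') (by exact_mod_cast Complex.ofReal_injective.ne hne)

noncomputable def FB (b : ℝ) : Polynomial ℂ :=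
  (exists_partition_poly ((q.roots.toFinset).image (fun x : ℝ => (x:ℂ))) (b:ℂ) (MM p q)).choose

lemma FB_spec1 (b : ℝ) :
    (Polynomial.X - Polynomial.C (b:ℂ)) ^ (MM p q) ∣ (FB p q b - 1) :=
  (exists_partition_poly _ _ _).choose_spec.1

lemma FB_spec2 (b : ℝ) (b' : ℝ) (hb' : b' ∈ q.roots.toFinset) (hne : b' ≠ b) :
    (Polynomial.X - Polynomial.C (b':ℂ)) ^ (MM p q) ∣ FB p q b :=
  (exists_partition_poly _ _ _).choose_spec.2 _
    (Finset.mem_image_of_mem _ hb') (by exact_mod_cast Complex.ofReal_injective.ne hne)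

/-- the local jet polynomial at the grid point `(a,b)` -/
noncomputable def jetP (a b : ℝ) : R2 :=
  ∑ k ∈ Finset.range (Polynomial.rootMultiplicity a p),
    ∑ l ∈ Finset.range (Polynomial.rootMultiplicity b q),
      C (c ⟨a, b⟩ k l) * (X 0 - C (a:ℂ)) ^ k * (X 1 - C (b:ℂ)) ^ l

/-- embeddings of one-variable polynomials -/
noncomputable def emb0 (r : Polynomial ℂ) : R2 := Polynomial.aeval (X 0) r
noncomputable def emb1 (r : Polynomial ℂ) : R2 := Polynomial.aeval (X 1) r

lemma emb0_pow_X_sub_C (α : ℂ) (N : ℕ) :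
    emb0 ((Polynomial.X - Polynomial.C α) ^ N) = (X (0:Fin 2) - C α) ^ N := by
  simp [emb0, algebraMap_eq]

lemma emb1_pow_X_sub_C (α : ℂ) (N : ℕ) :
    emb1 ((Polynomial.X - Polynomial.C α) ^ N) = (X (1:Fin 2) - C α) ^ N := by
  simp [emb1, algebraMap_eq]

/-- the interpolation polynomial -/
noncomputable def sPoly : R2 :=
  ∑ a ∈ p.roots.toFinset, ∑ b ∈ q.roots.toFinset,
    jetP p q c a b * emb0 (EA p q a) * emb1 (FB p q b)

lemma sPoly_decomp (hp : p ≠ 0) (hq : q ≠ 0)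
    (a₀ : ℝ) (ha₀ : a₀ ∈ p.roots.toFinset) (b₀ : ℝ) (hb₀ : b₀ ∈ q.roots.toFinset) :
    ∃ U V : R2, sPoly p q c = jetP p q c a₀ b₀
      + (X (0:Fin 2) - C (a₀:ℂ)) ^ (Polynomial.rootMultiplicity a₀ p) * U
      + (X (1:Fin 2) - C (b₀:ℂ)) ^ (Polynomial.rootMultiplicity b₀ q) * V := by
  classical
  set g0 : R2 := (X (0:Fin 2) - C (a₀:ℂ)) ^ (Polynomial.rootMultiplicity a₀ p) with hg0
  set h0 : R2 := (X (1:Fin 2) - C (b₀:ℂ)) ^ (Polynomial.rootMultiplicity b₀ q) with hh0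
  set I : Ideal R2 := Ideal.span {g0, h0} with hI
  have hgmem : ∀ t : R2, (X (0:Fin 2) - C (a₀:ℂ)) ^ (MM p q) ∣ t → t ∈ I := by
    intro t ht
    have h1 : g0 ∣ t := dvd_trans (pow_dvd_pow _ (mult_le_MM_left p q hp a₀)) ht
    obtain ⟨u, rfl⟩ := h1
    exact Ideal.mul_mem_right u _ (Ideal.subset_span (by simp))
  have hhmem : ∀ t : R2, (X (1:Fin 2) - C (b₀:ℂ)) ^ (MM p q) ∣ t → t ∈ I := by
    intro t ht
    have h1 : h0 ∣ t := dvd_trans (pow_dvd_pow _ (mult_le_MM_right p q hq b₀)) ht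
    obtain ⟨u, rfl⟩ := h1
    exact Ideal.mul_mem_right u _ (Ideal.subset_span (by simp))
  have hmem : sPoly p q c - jetP p q c a₀ b₀ ∈ I := by
    have hsum : ∑ a ∈ p.roots.toFinset, ∑ b ∈ q.roots.toFinset,
        (if a = a₀ ∧ b = b₀ then jetP p q c a₀ b₀ else (0:R2)) = jetP p q c a₀ b₀ := by
      rw [Finset.sum_eq_single_of_mem a₀ ha₀]
      · rw [Finset.sum_eq_single_of_mem b₀ hb₀]
        · simp
        · intro b hbB hbne
          rw [if_neg (fun h => hbne h.2)]
      · intro a haA hane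
        apply Finset.sum_eq_zero
        intro b _
        rw [if_neg (fun h => hane h.1)]
    have hrw : sPoly p q c - jetP p q c a₀ b₀
        = ∑ a ∈ p.roots.toFinset, ∑ b ∈ q.roots.toFinset,
          (jetP p q c a b * emb0 (EA p q a) * emb1 (FB p q b)
            - if a = a₀ ∧ b = b₀ then jetP p q c a₀ b₀ else 0) := by
      rw [sPoly]
      simp only [Finset.sum_sub_distrib]
      rw [hsum]
    rw [hrw]
    apply Ideal.sum_mem
    intro a haA
    apply Ideal.sum_mem
    intro b hbB
    by_cases h1 : a = a₀
    · subst h1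
      by_cases h2 : b = b₀
      · subst h2
        rw [if_pos ⟨rfl, rfl⟩]
        have hsplit : jetP p q c a b * emb0 (EA p q a) * emb1 (FB p q b) - jetP p q c a b
            = jetP p q c a b * (emb0 (EA p q a) - 1) * emb1 (FB p q b)
              + jetP p q c a b * (emb1 (FB p q b) - 1) := by ring
        rw [hsplit]
        apply I.add_mem
        · apply hgmem
          have hd : (X (0:Fin 2) - C ((a:ℝ):ℂ)) ^ (MM p q) ∣ (emb0 (EA p q a) - 1) := by
            have := map_dvd (Polynomial.aeval (X (0:Fin 2) : R2)) (EA_spec1 p q a)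
            rw [map_sub, map_one, map_pow, map_sub, Polynomial.aeval_X, Polynomial.aeval_C] at this
            simpa [emb0, algebraMap_eq] using this
          exact (hd.mul_left _).mul_right _
        · apply hhmem
          have hd : (X (1:Fin 2) - C ((b:ℝ):ℂ)) ^ (MM p q) ∣ (emb1 (FB p q b) - 1) := by
            have := map_dvd (Polynomial.aeval (X (1:Fin 2) : R2)) (FB_spec1 p q b)
            rw [map_sub, map_one, map_pow, map_sub, Polynomial.aeval_X, Polynomial.aeval_C] at this
            simpa [emb1, algebraMap_eq] using this
          exact hd.mul_left _
      · rw [if_neg (fun h => h2 h.2), sub_zero]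
        apply hhmem
        have hd : (X (1:Fin 2) - C ((b₀:ℝ):ℂ)) ^ (MM p q) ∣ emb1 (FB p q b) := by
          have := map_dvd (Polynomial.aeval (X (1:Fin 2) : R2)) (FB_spec2 p q b b₀ hb₀ (Ne.symm h2))
          rw [map_pow, map_sub, Polynomial.aeval_X, Polynomial.aeval_C] at this
          simpa [emb1, algebraMap_eq] using this
        exact hd.mul_left _
    · rw [if_neg (fun h => h1 h.1), sub_zero]
      apply hgmem
      have hd : (X (0:Fin 2) - C ((a₀:ℝ):ℂ)) ^ (MM p q) ∣ emb0 (EA p q a) := by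
        have := map_dvd (Polynomial.aeval (X (0:Fin 2) : R2)) (EA_spec2 p q a a₀ ha₀ (Ne.symm h1))
        rw [map_pow, map_sub, Polynomial.aeval_X, Polynomial.aeval_C] at this
        simpa [emb0, algebraMap_eq] using this
      exact (hd.mul_left _).mul_right _
  rw [hI, Ideal.mem_span_pair] at hmem
  obtain ⟨U, V, hUV⟩ := hmem
  exact ⟨U, V, by rw [hg0] at hUV; rw [hh0] at hUV; linear_combination -hUV⟩

end Construction

lemma sPoly_jet (p q : Polynomial ℝ) (c : ℂ → ℕ → ℕ → ℂ) (hp : p ≠ 0) (hq : q ≠ 0)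
    (a₀ : ℝ) (ha₀ : a₀ ∈ p.roots.toFinset) (b₀ : ℝ) (hb₀ : b₀ ∈ q.roots.toFinset)
    (k : ℕ) (hk : k < Polynomial.rootMultiplicity a₀ p)
    (l : ℕ) (hl : l < Polynomial.rootMultiplicity b₀ q) :
    eval ![(a₀:ℂ), (b₀:ℂ)] ((fun t => pderiv (0:Fin 2) t)^[k]
      ((fun t => pderiv (1:Fin 2) t)^[l] (sPoly p q c)))
      = (k.factorial * l.factorial : ℕ) * c ⟨a₀, b₀⟩ k l := by
  obtain ⟨U, V, hUV⟩ := sPoly_decomp p q c hp hq a₀ ha₀ b₀ hb₀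
  rw [hUV]
  rw [iter_pderiv_add, iter_pderiv_add, iter_pderiv_add, iter_pderiv_add, map_add, map_add]
  rw [vanish0 _ _ _ k l hk ⟨U, rfl⟩, vanish1 _ _ _ k l hl ⟨V, rfl⟩, add_zero, add_zero]
  rw [jetP]
  simp only [iter_pderiv_sum, map_sum]
  rw [Finset.sum_eq_single_of_mem k (Finset.mem_range.2 hk)]
  · rw [Finset.sum_eq_single_of_mem l (Finset.mem_range.2 hl)]
    · rw [eval_iter_jet, if_pos ⟨rfl, rfl⟩]
      push_cast
      ring
    · intro l' _ hne
      rw [eval_iter_jet, if_neg (fun h => hne h.2)]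
  · intro k' _ hne
    apply Finset.sum_eq_zero
    intro l' _
    rw [eval_iter_jet, if_neg (fun h => hne h.1)]

lemma eval_jetP (p q : Polynomial ℝ) (c : ℂ → ℕ → ℕ → ℂ) (a b : ℝ) (x y : ℂ) :
    eval ![x, y] (jetP p q c a b)
      = ∑ k ∈ Finset.range (Polynomial.rootMultiplicity a p),
          ∑ l ∈ Finset.range (Polynomial.rootMultiplicity b q),
            c ⟨a, b⟩ k l * (x - (a:ℂ)) ^ k * (y - (b:ℂ)) ^ l := by
  rw [jetP]
  simp only [map_sum, map_mul, map_pow, map_sub, eval_C, eval_X]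
  rfl

lemma cont_vec : Continuous fun z : ℂ => (![(z.re:ℂ), (z.im:ℂ)] : Fin 2 → ℂ) := by
  apply continuous_pi
  intro i
  fin_cases i
  · have h : Continuous fun z : ℂ => (z.re : ℂ) := Complex.continuous_ofReal.comp Complex.continuous_re
    simpa using h
  · have h : Continuous fun z : ℂ => (z.im : ℂ) := Complex.continuous_ofReal.comp Complex.continuous_im
    simpa using h

lemma eval_bound_on_ball (u : MvPolynomial (Fin 2) ℂ) (w : ℂ) :
    ∃ CU : ℝ, 0 ≤ CU ∧ ∀ z ∈ Metric.closedBall w 1,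
      ‖eval ![(z.re:ℂ), (z.im:ℂ)] u‖ ≤ CU := by
  obtain ⟨CU, hCU⟩ := (isCompact_closedBall w 1).exists_bound_of_continuousOn
    (((u.continuous_eval).comp cont_vec).continuousOn)
  refine ⟨max CU 0, le_max_right _ _, fun z hz => le_trans (hCU z hz) (le_max_left _ _)⟩

lemma local_bound (p q : Polynomial ℝ) (hp : p ≠ 0) (hq : q ≠ 0)
    (K : Set ℂ) (Z : Set ℂ) (hZ : Z = {z : ℂ | p.eval z.re = 0 ∧ q.eval z.im = 0})
    (C₀ : ℝ) (hC₀ : 0 < C₀)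
    (hdom : ∀ z ∈ K, max |p.eval z.re| |q.eval z.im| ≤ C₀ * |p.eval z.re + q.eval z.im|)
    (φ : ℂ → ℂ) (c : ℂ → ℕ → ℕ → ℂ) (w : ℂ) (hw : w ∈ K ∩ Z)
    (Cw : ℝ) (hCw : 0 < Cw) (δw : ℝ) (hδw : 0 < δw)
    (hcw : ∀ z ∈ K \ Z, z ≠ w → ‖z - w‖ < δw →
      ‖φ z - ∑ k ∈ Finset.range (Polynomial.rootMultiplicity w.re p),
          ∑ l ∈ Finset.range (Polynomial.rootMultiplicity w.im q),
          c w k l * ((z - w).re : ℂ) ^ k * ((z - w).im : ℂ) ^ l‖ ≤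
        Cw * max (|(z - w).re| ^ Polynomial.rootMultiplicity w.re p)
                 (|(z - w).im| ^ Polynomial.rootMultiplicity w.im q)) :
    ∃ ρ > (0:ℝ), ∃ CC : ℝ, ∀ z ∈ K \ Z, dist z w < ρ →
      ‖φ z - eval ![(z.re:ℂ), (z.im:ℂ)] (sPoly p q c)‖
        ≤ CC * |p.eval z.re + q.eval z.im| := by
  classical
  have hwZ : w ∈ Z := hw.2
  rw [hZ] at hwZ
  have ha₀ : w.re ∈ p.roots.toFinset :=
    Multiset.mem_toFinset.2 ((Polynomial.mem_roots').2 ⟨hp, hwZ.1⟩)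
  have hb₀ : w.im ∈ q.roots.toFinset :=
    Multiset.mem_toFinset.2 ((Polynomial.mem_roots').2 ⟨hq, hwZ.2⟩)
  obtain ⟨U, V, hUV⟩ := sPoly_decomp p q c hp hq w.re ha₀ w.im hb₀
  obtain ⟨p₁, hp₁0, hp₁⟩ := exists_factor_real p hp w.re
  obtain ⟨q₁, hq₁0, hq₁⟩ := exists_factor_real q hq w.im
  obtain ⟨ρ₁, hρ₁, hρ₁'⟩ := exists_lower_bound_near p₁ w.re hp₁0
  obtain ⟨ρ₂, hρ₂, hρ₂'⟩ := exists_lower_bound_near q₁ w.im hq₁0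
  obtain ⟨CU, hCU0, hCU⟩ := eval_bound_on_ball U w
  obtain ⟨CV, hCV0, hCV⟩ := eval_bound_on_ball V w
  have hpa := abs_pos.2 hp₁0
  have hqb := abs_pos.2 hq₁0
  refine ⟨min (min ρ₁ ρ₂) (min (δw/2) 1), by positivity,
    (Cw + CU + CV) * (2/|p₁.eval w.re| * C₀ + 2/|q₁.eval w.im| * C₀), ?_⟩
  intro z hz hdist
  have hzK : z ∈ K := hz.1
  have hzZ : z ∉ Z := hz.2
  have hzw : ‖z - w‖ = dist z w := (dist_eq_norm z w).symm
  have hxw : |z.re - w.re| ≤ dist z w := by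
    rw [← hzw]
    simpa [Complex.sub_re] using Complex.abs_re_le_norm (z - w)
  have hyw : |z.im - w.im| ≤ dist z w := by
    rw [← hzw]
    simpa [Complex.sub_im] using Complex.abs_im_le_norm (z - w)
  have hd1 : dist z w ≤ ρ₁ := le_trans hdist.le (le_trans (min_le_left _ _) (min_le_left _ _))
  have hd2 : dist z w ≤ ρ₂ := le_trans hdist.le (le_trans (min_le_left _ _) (min_le_right _ _))
  have hdδ : dist z w < δw := lt_of_lt_of_le hdist
    (le_trans (min_le_right _ _) (le_trans (min_le_left _ _) (by linarith)))
  have hd3 : dist z w ≤ 1 := le_trans hdist.le (le_trans (min_le_right _ _) (min_le_right _ _))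
  have hxm : (0:ℝ) ≤ |z.re - w.re| ^ Polynomial.rootMultiplicity w.re p := by positivity
  have hyn : (0:ℝ) ≤ |z.im - w.im| ^ Polynomial.rootMultiplicity w.im q := by positivity
  -- key pointwise bounds
  have key1 : |z.re - w.re| ^ Polynomial.rootMultiplicity w.re p
      ≤ 2 / |p₁.eval w.re| * (C₀ * |p.eval z.re + q.eval z.im|) := by
    have h1 : |p₁.eval w.re| / 2 ≤ |p₁.eval z.re| := hρ₁' z.re (le_trans hxw hd1)
    have h2 : |p.eval z.re| = |z.re - w.re| ^ Polynomial.rootMultiplicity w.re p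
        * |p₁.eval z.re| := by
      rw [hp₁ z.re, abs_mul, abs_pow]
    have h3 : |p.eval z.re| ≤ C₀ * |p.eval z.re + q.eval z.im| :=
      le_trans (le_max_left _ _) (hdom z hzK)
    rw [div_mul_eq_mul_div, le_div_iff₀ hpa]
    have h5 := mul_le_mul_of_nonneg_left h1 hxm
    linarith
  have key2 : |z.im - w.im| ^ Polynomial.rootMultiplicity w.im q
      ≤ 2 / |q₁.eval w.im| * (C₀ * |p.eval z.re + q.eval z.im|) := by
    have h1 : |q₁.eval w.im| / 2 ≤ |q₁.eval z.im| := hρ₂' z.im (le_trans hyw hd2)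
    have h2 : |q.eval z.im| = |z.im - w.im| ^ Polynomial.rootMultiplicity w.im q
        * |q₁.eval z.im| := by
      rw [hq₁ z.im, abs_mul, abs_pow]
    have h3 : |q.eval z.im| ≤ C₀ * |p.eval z.re + q.eval z.im| :=
      le_trans (le_max_right _ _) (hdom z hzK)
    rw [div_mul_eq_mul_div, le_div_iff₀ hqb]
    have h5 := mul_le_mul_of_nonneg_left h1 hyn
    linarith
  -- the jet value
  have hJeq : eval ![(z.re:ℂ), (z.im:ℂ)] (jetP p q c w.re w.im)
      = ∑ k ∈ Finset.range (Polynomial.rootMultiplicity w.re p),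
          ∑ l ∈ Finset.range (Polynomial.rootMultiplicity w.im q),
          c w k l * ((z - w).re : ℂ) ^ k * ((z - w).im : ℂ) ^ l := by
    rw [eval_jetP]
    have hwab : (⟨w.re, w.im⟩ : ℂ) = w := rfl
    simp [hwab, Complex.sub_re, Complex.sub_im]
  have hzne : z ≠ w := fun h => hzZ (h ▸ hw.2)
  have hφJ : ‖φ z - eval ![(z.re:ℂ), (z.im:ℂ)] (jetP p q c w.re w.im)‖
      ≤ Cw * max (|z.re - w.re| ^ Polynomial.rootMultiplicity w.re p)
                 (|z.im - w.im| ^ Polynomial.rootMultiplicity w.im q) := by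
    have := hcw z hz hzne (by rw [hzw]; exact hdδ)
    rw [hJeq]
    simpa [Complex.sub_re, Complex.sub_im] using this
  have hSJ : ‖eval ![(z.re:ℂ), (z.im:ℂ)] (sPoly p q c)
        - eval ![(z.re:ℂ), (z.im:ℂ)] (jetP p q c w.re w.im)‖
      ≤ |z.re - w.re| ^ Polynomial.rootMultiplicity w.re p * CU
        + |z.im - w.im| ^ Polynomial.rootMultiplicity w.im q * CV := by
    have hzball : z ∈ Metric.closedBall w 1 := Metric.mem_closedBall.2 hd3
    have hev : eval ![(z.re:ℂ), (z.im:ℂ)] (sPoly p q c)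
          - eval ![(z.re:ℂ), (z.im:ℂ)] (jetP p q c w.re w.im)
        = ((z.re - w.re : ℝ) : ℂ) ^ Polynomial.rootMultiplicity w.re p
            * eval ![(z.re:ℂ), (z.im:ℂ)] U
          + ((z.im - w.im : ℝ) : ℂ) ^ Polynomial.rootMultiplicity w.im q
            * eval ![(z.re:ℂ), (z.im:ℂ)] V := by
      rw [hUV]
      simp only [map_add, map_mul, map_pow, map_sub, eval_X, eval_C]
      rw [show (![(z.re:ℂ), (z.im:ℂ)] : Fin 2 → ℂ) 0 = (z.re:ℂ) from rfl,
        show (![(z.re:ℂ), (z.im:ℂ)] : Fin 2 → ℂ) 1 = (z.im:ℂ) from rfl]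
      push_cast
      ring
    rw [hev]
    refine le_trans (norm_add_le _ _) (add_le_add ?_ ?_)
    · rw [norm_mul, norm_pow, Complex.norm_real]
      exact mul_le_mul_of_nonneg_left (hCU z hzball) (by positivity)
    · rw [norm_mul, norm_pow, Complex.norm_real]
      exact mul_le_mul_of_nonneg_left (hCV z hzball) (by positivity)
  have hmaxle : max (|z.re - w.re| ^ Polynomial.rootMultiplicity w.re p)
        (|z.im - w.im| ^ Polynomial.rootMultiplicity w.im q)
      ≤ |z.re - w.re| ^ Polynomial.rootMultiplicity w.re p
        + |z.im - w.im| ^ Polynomial.rootMultiplicity w.im q :=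
    max_le (le_add_of_nonneg_right hyn) (le_add_of_nonneg_left hxm)
  have htri : ‖φ z - eval ![(z.re:ℂ), (z.im:ℂ)] (sPoly p q c)‖
      ≤ ‖φ z - eval ![(z.re:ℂ), (z.im:ℂ)] (jetP p q c w.re w.im)‖
        + ‖eval ![(z.re:ℂ), (z.im:ℂ)] (sPoly p q c)
            - eval ![(z.re:ℂ), (z.im:ℂ)] (jetP p q c w.re w.im)‖ := by
    have h : φ z - eval ![(z.re:ℂ), (z.im:ℂ)] (sPoly p q c)
        = (φ z - eval ![(z.re:ℂ), (z.im:ℂ)] (jetP p q c w.re w.im))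
          - (eval ![(z.re:ℂ), (z.im:ℂ)] (sPoly p q c)
              - eval ![(z.re:ℂ), (z.im:ℂ)] (jetP p q c w.re w.im)) := by ring
    rw [h]
    exact norm_sub_le _ _
  have hcmb := mul_le_mul_of_nonneg_left hmaxle hCw.le
  calc ‖φ z - eval ![(z.re:ℂ), (z.im:ℂ)] (sPoly p q c)‖
      ≤ (Cw + CU + CV) * (|z.re - w.re| ^ Polynomial.rootMultiplicity w.re p
          + |z.im - w.im| ^ Polynomial.rootMultiplicity w.im q) := by nlinarith
    _ ≤ (Cw + CU + CV) * (2/|p₁.eval w.re| * (C₀ * |p.eval z.re + q.eval z.im|)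
          + 2/|q₁.eval w.im| * (C₀ * |p.eval z.re + q.eval z.im|)) := by
        have hs : (0:ℝ) ≤ Cw + CU + CV := by linarith
        exact mul_le_mul_of_nonneg_left (add_le_add key1 key2) hs
    _ = (Cw + CU + CV) * (2/|p₁.eval w.re| * C₀ + 2/|q₁.eval w.im| * C₀)
          * |p.eval z.re + q.eval z.im| := by ring

end Stmt13Aux

open Stmt13Aux in
/-- Decomposition `φ = s + (p(Re·)+q(Im·))·g` of a function `φ` on `K \ Z`
(`K ⊆ ℂ` compact, `Z` the joint zero set of `p(Re·)` and `q(Im·)`): if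
`max(|p(Re z)|,|q(Im z)|) ≤ C₀|p(Re z)+q(Im z)|` on `K`, `φ` is bounded and Borel measurable
on `K \ Z` and has the regular growth behaviour with jet coefficients `c^w_{k,l}` at each
`w ∈ K ∩ Z`, then there are a two-variable polynomial `s` interpolating the jets and a
bounded Borel measurable `g` on `K \ Z` with
`φ(z) = s(Re z, Im z) + (p(Re z)+q(Im z))·g(z)` on `K \ Z`. -/
theorem stmt_13 (p q : Polynomial ℝ) (hp : p ≠ 0) (hq : q ≠ 0)
    (K : Set ℂ) (hK : IsCompact K)
    (Z : Set ℂ) (hZ : Z = {z : ℂ | p.eval z.re = 0 ∧ q.eval z.im = 0})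
    (C₀ : ℝ) (hC₀ : 0 < C₀)
    (hdom : ∀ z ∈ K, max |p.eval z.re| |q.eval z.im| ≤ C₀ * |p.eval z.re + q.eval z.im|)
    (φ : ℂ → ℂ) (Cφ : ℝ) (hφbdd : ∀ z ∈ K \ Z, ‖φ z‖ ≤ Cφ)
    (hφmeas : Measurable ((K \ Z).restrict φ))
    (c : ℂ → ℕ → ℕ → ℂ)
    (hc : ∀ w ∈ K ∩ Z, ∃ Cw > (0 : ℝ), ∃ δw > (0 : ℝ), ∀ z ∈ K \ Z, z ≠ w →
      ‖z - w‖ < δw →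
      ‖φ z - ∑ k ∈ Finset.range (Polynomial.rootMultiplicity w.re p),
          ∑ l ∈ Finset.range (Polynomial.rootMultiplicity w.im q),
          c w k l * ((z - w).re : ℂ) ^ k * ((z - w).im : ℂ) ^ l‖ ≤
        Cw * max (|(z - w).re| ^ Polynomial.rootMultiplicity w.re p)
                 (|(z - w).im| ^ Polynomial.rootMultiplicity w.im q)) :
    ∃ (s : MvPolynomial (Fin 2) ℂ) (g : ℂ → ℂ),
      (∀ w ∈ K ∩ Z, ∀ k < Polynomial.rootMultiplicity w.re p,
        ∀ l < Polynomial.rootMultiplicity w.im q,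
        (((k.factorial * l.factorial : ℕ) : ℂ))⁻¹ *
          MvPolynomial.eval ![(w.re : ℂ), (w.im : ℂ)]
            ((fun t => MvPolynomial.pderiv (0 : Fin 2) t)^[k]
              ((fun t => MvPolynomial.pderiv (1 : Fin 2) t)^[l] s)) = c w k l) ∧
      (∃ Cg : ℝ, ∀ z ∈ K \ Z, ‖g z‖ ≤ Cg) ∧
      Measurable ((K \ Z).restrict g) ∧
      (∀ z ∈ K \ Z,
        φ z = MvPolynomial.eval ![(z.re : ℂ), (z.im : ℂ)] s +
          ((p.eval z.re + q.eval z.im : ℝ) : ℂ) * g z) := by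
  classical
  -- shared facts
  have hden0 : ∀ z ∈ K, p.eval z.re + q.eval z.im = 0 → z ∈ Z := by
    intro z hzK h0
    have h1 := hdom z hzK
    rw [h0, abs_zero, mul_zero] at h1
    rw [hZ]
    exact ⟨abs_eq_zero.1 (le_antisymm (le_trans (le_max_left _ _) h1) (abs_nonneg _)),
      abs_eq_zero.1 (le_antisymm (le_trans (le_max_right _ _) h1) (abs_nonneg _))⟩
  have hScont : Continuous (fun z : ℂ => eval ![(z.re:ℂ), (z.im:ℂ)] (sPoly p q c)) :=
    ((sPoly p q c).continuous_eval).comp cont_vec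
  refine ⟨sPoly p q c,
    fun z => (φ z - eval ![(z.re:ℂ), (z.im:ℂ)] (sPoly p q c))
      * (((p.eval z.re + q.eval z.im : ℝ) : ℂ))⁻¹, ?_, ?_, ?_, ?_⟩
  · -- jet interpolation
    intro w hw k hk l hl
    have hwZ : w ∈ Z := hw.2
    rw [hZ] at hwZ
    have ha₀ : w.re ∈ p.roots.toFinset :=
      Multiset.mem_toFinset.2 ((Polynomial.mem_roots').2 ⟨hp, hwZ.1⟩)
    have hb₀ : w.im ∈ q.roots.toFinset :=
      Multiset.mem_toFinset.2 ((Polynomial.mem_roots').2 ⟨hq, hwZ.2⟩)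
    have hjet := sPoly_jet p q c hp hq w.re ha₀ w.im hb₀ k hk l hl
    have hwab : (⟨w.re, w.im⟩ : ℂ) = w := rfl
    rw [hwab] at hjet
    rw [hjet, inv_mul_cancel_left₀]
    exact_mod_cast Nat.cast_ne_zero.2
      (Nat.mul_ne_zero k.factorial_ne_zero l.factorial_ne_zero)
  · -- boundedness
    have hKZfin : (K ∩ Z).Finite := by
      have hZfin : Z.Finite := by
        have hfp := Polynomial.finite_setOf_isRoot hp
        have hfq := Polynomial.finite_setOf_isRoot hq
        refine Set.Finite.subset ((hfp.prod hfq).image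
          (fun ab : ℝ × ℝ => (⟨ab.1, ab.2⟩ : ℂ))) ?_
        intro z hz
        rw [hZ] at hz
        exact ⟨(z.re, z.im), ⟨hz.1, hz.2⟩, rfl⟩
      exact hZfin.subset Set.inter_subset_right
    have hloc : ∀ w ∈ K ∩ Z, ∃ ρ > (0:ℝ), ∃ CC : ℝ, ∀ z ∈ K \ Z, dist z w < ρ →
        ‖φ z - eval ![(z.re:ℂ), (z.im:ℂ)] (sPoly p q c)‖
          ≤ CC * |p.eval z.re + q.eval z.im| := by
      intro w hw
      obtain ⟨Cw, hCw, δw, hδw, hcw⟩ := hc w hw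
      exact local_bound p q hp hq K Z hZ C₀ hC₀ hdom φ c w hw Cw hCw δw hδw hcw
    choose! ρ hρ CC hCC using hloc
    set T : Finset ℂ := hKZfin.toFinset with hT
    set K' : Set ℂ := K \ ⋃ w ∈ T, Metric.ball w (ρ w) with hK'
    have hK'cpt : IsCompact K' := hK.diff (isOpen_biUnion fun w _ => Metric.isOpen_ball)
    have hK'ne : ∀ z ∈ K', p.eval z.re + q.eval z.im ≠ 0 := by
      intro z hzK' h0
      have hzZ : z ∈ Z := hden0 z hzK'.1 h0
      have hzT : z ∈ T := hKZfin.mem_toFinset.2 ⟨hzK'.1, hzZ⟩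
      exact hzK'.2 (Set.mem_biUnion hzT
        (Metric.mem_ball_self (hρ z ⟨hzK'.1, hzZ⟩)))
    obtain ⟨ε, hε, hεK'⟩ : ∃ ε > (0:ℝ), ∀ z ∈ K', ε ≤ |p.eval z.re + q.eval z.im| := by
      rcases Set.eq_empty_or_nonempty K' with hKe | hne
      · exact ⟨1, one_pos, fun z hz => absurd (hKe ▸ hz) (Set.notMem_empty z)⟩
      · have hcont : ContinuousOn (fun z : ℂ => |p.eval z.re + q.eval z.im|) K' :=
          (continuous_abs.comp ((p.continuous.comp Complex.continuous_re).add
            (q.continuous.comp Complex.continuous_im))).continuousOn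
        obtain ⟨z₀, hz₀K, hz₀min⟩ := hK'cpt.exists_isMinOn hne hcont
        exact ⟨_, abs_pos.2 (hK'ne z₀ hz₀K), fun z hz => hz₀min hz⟩
    obtain ⟨CS, hCS⟩ := hK.exists_bound_of_continuousOn hScont.continuousOn
    refine ⟨(∑ w ∈ T, |CC w|) + |(Cφ + CS)/ε|, ?_⟩
    intro z hz
    have hdne : p.eval z.re + q.eval z.im ≠ 0 := fun h0 => hz.2 (hden0 z hz.1 h0)
    have habs : 0 < |p.eval z.re + q.eval z.im| := abs_pos.2 hdne
    by_cases hball : ∃ w ∈ T, dist z w < ρ w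
    · obtain ⟨w, hwT, hwρ⟩ := hball
      have hwKZ : w ∈ K ∩ Z := hKZfin.mem_toFinset.1 hwT
      have h1 := hCC w hwKZ z hz hwρ
      have hg : ‖(φ z - eval ![(z.re:ℂ), (z.im:ℂ)] (sPoly p q c))
          * (((p.eval z.re + q.eval z.im : ℝ) : ℂ))⁻¹‖ ≤ CC w := by
        rw [norm_mul, norm_inv, Complex.norm_real, ← div_eq_mul_inv]
        exact (div_le_iff₀ habs).2 h1
      have h2 : CC w ≤ ∑ w' ∈ T, |CC w'| :=
        le_trans (le_abs_self _) (Finset.single_le_sum (f := fun w' => |CC w'|) (fun _ _ => abs_nonneg _) hwT)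
      have h3 : (0:ℝ) ≤ |(Cφ + CS)/ε| := abs_nonneg _
      linarith
    · have hzK' : z ∈ K' := by
        refine ⟨hz.1, fun hmem => ?_⟩
        rw [Set.mem_iUnion₂] at hmem
        obtain ⟨w, hwT, hwb⟩ := hmem
        exact hball ⟨w, hwT, Metric.mem_ball.1 hwb⟩
      have hεz := hεK' z hzK'
      have hφz := hφbdd z hz
      have hSz := hCS z hz.1
      have hnum : ‖φ z - eval ![(z.re:ℂ), (z.im:ℂ)] (sPoly p q c)‖ ≤ Cφ + CS :=
        le_trans (norm_sub_le _ _) (add_le_add hφz hSz)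
      have hg : ‖(φ z - eval ![(z.re:ℂ), (z.im:ℂ)] (sPoly p q c))
          * (((p.eval z.re + q.eval z.im : ℝ) : ℂ))⁻¹‖ ≤ (Cφ + CS)/ε := by
        rw [norm_mul, norm_inv, Complex.norm_real, ← div_eq_mul_inv]
        refine div_le_div₀ ?_ hnum hε hεz
        linarith [norm_nonneg (φ z), norm_nonneg (eval ![(z.re:ℂ), (z.im:ℂ)] (sPoly p q c)),
          hφz, hSz]
      have h2 : (0:ℝ) ≤ ∑ w' ∈ T, |CC w'| := Finset.sum_nonneg fun _ _ => abs_nonneg _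
      linarith [le_abs_self ((Cφ + CS)/ε)]
  · -- measurability
    have hdencont : Continuous fun z : ℂ => (((p.eval z.re + q.eval z.im : ℝ)) : ℂ) :=
      Complex.continuous_ofReal.comp ((p.continuous.comp Complex.continuous_re).add
        (q.continuous.comp Complex.continuous_im))
    exact (hφmeas.sub ((hScont.comp continuous_subtype_val).measurable)).mul
      (((hdencont.comp continuous_subtype_val).measurable).inv)
  · -- the identity
    intro z hz
    have hdne : (((p.eval z.re + q.eval z.im : ℝ)) : ℂ) ≠ 0 :=
      Complex.ofReal_ne_zero.2 (fun h0 => hz.2 (hden0 z hz.1 h0))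
    have hcancel : (((p.eval z.re + q.eval z.im : ℝ)) : ℂ)
        * ((φ z - eval ![(z.re:ℂ), (z.im:ℂ)] (sPoly p q c))
          * (((p.eval z.re + q.eval z.im : ℝ) : ℂ))⁻¹)
        = φ z - eval ![(z.re:ℂ), (z.im:ℂ)] (sPoly p q c) := by
      field_simp
    rw [hcancel]
    ring
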